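/- Let G ≤ Sym(Ω), let u ≠ v be points of Ω, and set ℓ = {w ∈ Ω : G_{uv} ≤ G_w}. Then: (1) the pointwise stabiliser of ℓ in G equals G_{uv}; (2) the setwise stabiliser of ℓ in G equals the normaliser N_G(G_{uv}); (3) the permutation group induced by the setwise stabiliser of ℓ on ℓ is isomorphic to N_G(G_{uv})/G_{uv}. -/

import Mathlib

open Pointwise

private lemma mem_stab_smul' {Ω : Type*} {G : Subgroup (Equiv.Perm Ω)} (n g : G) (w : Ω) :
    n ∈ MulAction.stabilizer G (g • w) ↔ g⁻¹ * n * g ∈ MulAction.stabilizer G w := by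
  rw [MulAction.mem_stabilizer_iff, MulAction.mem_stabilizer_iff, mul_smul, mul_smul,
    inv_smul_eq_iff]

/-- The permutation of a `G`-invariant set `ℓ` induced by an element of the
setwise stabiliser of `ℓ`. -/
def inducedPerm {Ω : Type*} (G : Subgroup (Equiv.Perm Ω)) (ℓ : Set Ω)
    (g : MulAction.stabilizer G ℓ) : Equiv.Perm ℓ :=
  Equiv.Perm.subtypePerm ((g : G) : Equiv.Perm Ω) (by
    intro x
    have h : (g : G) • ℓ = ℓ := g.2
    constructor
    · intro hx
      have hx2 : ((g : G) : Equiv.Perm Ω) x ∈ (g : G) • ℓ := by rw [h]; exact hx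
      obtain ⟨y, hy, hxy⟩ := hx2
      have : y = x := (g : G).1.injective hxy
      rwa [← this]
    · intro hx
      have := Set.smul_mem_smul_set (a := (g : G)) hx
      rw [h] at this
      exact this)

/-- The restriction homomorphism from the setwise stabiliser of `ℓ` to the
permutation group of `ℓ`; its range is the permutation group induced on `ℓ`. -/
def resHom {Ω : Type*} (G : Subgroup (Equiv.Perm Ω)) (ℓ : Set Ω) :
    MulAction.stabilizer G ℓ →* Equiv.Perm ℓ where
  toFun := inducedPerm G ℓ
  map_one' := by ext x; rfl
  map_mul' g h := by ext x; rfl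

/-- For `ℓ = Λ_{uv} = {w : G_{uv} ≤ G_w}`: (1) the pointwise stabiliser of `ℓ`
equals `G_{uv}`; (2) the setwise stabiliser of `ℓ` equals `N_G(G_{uv})`;
(3) the permutation group induced on `ℓ` by the setwise stabiliser is isomorphic
to `N_G(G_{uv})/G_{uv}`. -/
theorem stmt_11 {Ω : Type*} (G : Subgroup (Equiv.Perm Ω)) (u v : Ω) (huv : u ≠ v) :
    (⨅ w ∈ {w : Ω | MulAction.stabilizer G u ⊓ MulAction.stabilizer G v ≤
        MulAction.stabilizer G w}, MulAction.stabilizer G w) =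
      MulAction.stabilizer G u ⊓ MulAction.stabilizer G v ∧
    MulAction.stabilizer G ({w : Ω | MulAction.stabilizer G u ⊓ MulAction.stabilizer G v ≤
        MulAction.stabilizer G w} : Set Ω) =
      Subgroup.normalizer ((MulAction.stabilizer G u ⊓ MulAction.stabilizer G v : Subgroup G) : Set G) ∧
    Nonempty
      ((resHom G {w : Ω | MulAction.stabilizer G u ⊓ MulAction.stabilizer G v ≤
          MulAction.stabilizer G w}).range ≃*
        Subgroup.normalizer ((MulAction.stabilizer G u ⊓ MulAction.stabilizer G v : Subgroup G) : Set G) ⧸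
          (MulAction.stabilizer G u ⊓ MulAction.stabilizer G v).subgroupOf
            (Subgroup.normalizer ((MulAction.stabilizer G u ⊓ MulAction.stabilizer G v : Subgroup G) : Set G))) := by
  set H := MulAction.stabilizer G u ⊓ MulAction.stabilizer G v with hH
  set ℓ : Set Ω := {w : Ω | H ≤ MulAction.stabilizer G w} with hℓ
  have hu : u ∈ ℓ := by intro n hn; exact hn.1
  have hv : v ∈ ℓ := by intro n hn; exact hn.2
  -- Part (1)
  have part1 : (⨅ w ∈ ℓ, MulAction.stabilizer G w) = H := by
    apply le_antisymm
    · exact le_inf (biInf_le _ hu) (biInf_le _ hv)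
    · exact le_iInf₂ fun w hw => hw
  -- Part (2)
  have part2 : MulAction.stabilizer G ℓ = (Subgroup.normalizer (H : Set G)) := by
    have key : ∀ g ∈ (Subgroup.normalizer (H : Set G)), ∀ w ∈ ℓ, g • w ∈ ℓ := by
      intro g hg w hw n hn
      rw [mem_stab_smul']
      have := (Subgroup.mem_normalizer_iff.mp (Subgroup.inv_mem _ hg) n).mp hn
      exact hw (by simpa using this)
    ext g
    rw [MulAction.mem_stabilizer_iff]
    constructor
    · intro hg
      have h1 : ∀ n ∈ H, g⁻¹ * n * g ∈ H := by
        intro n hn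
        have hgu : g • u ∈ ℓ := hg ▸ Set.smul_mem_smul_set hu
        have hgv : g • v ∈ ℓ := hg ▸ Set.smul_mem_smul_set hv
        exact ⟨(mem_stab_smul' n g u).mp (hgu hn), (mem_stab_smul' n g v).mp (hgv hn)⟩
      have h2 : ∀ n ∈ H, g * n * g⁻¹ ∈ H := by
        intro n hn
        have hgiu : g⁻¹ • u ∈ ℓ :=
          Set.mem_smul_set_iff_inv_smul_mem.mp (hg.symm ▸ hu)
        have hgiv : g⁻¹ • v ∈ ℓ :=
          Set.mem_smul_set_iff_inv_smul_mem.mp (hg.symm ▸ hv)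
        refine ⟨?_, ?_⟩
        · have := (mem_stab_smul' n g⁻¹ u).mp (hgiu hn); simpa using this
        · have := (mem_stab_smul' n g⁻¹ v).mp (hgiv hn); simpa using this
      rw [Subgroup.mem_normalizer_iff]
      intro n
      constructor
      · exact h2 n
      · intro hn
        have := h1 _ hn
        simpa [mul_assoc] using this
    · intro hg
      ext x
      constructor
      · rintro ⟨w, hw, rfl⟩
        exact key g hg w hw
      · intro hx
        exact ⟨g⁻¹ • x, key g⁻¹ (Subgroup.inv_mem _ hg) x hx, smul_inv_smul g x⟩
  refine ⟨part1, part2, ?_⟩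
  -- Part (3)
  have hker : (resHom G ℓ).ker = H.subgroupOf (MulAction.stabilizer G ℓ) := by
    ext g
    rw [MonoidHom.mem_ker, Subgroup.mem_subgroupOf]
    constructor
    · intro hg
      have hfix : ∀ w (hw : w ∈ ℓ), ((g : G) : Equiv.Perm Ω) w = w := by
        intro w hw
        have := congrArg (fun p => (p ⟨w, hw⟩ : Ω)) hg
        simpa [resHom, inducedPerm] using this
      exact ⟨hfix u hu, hfix v hv⟩
    · intro hg
      ext ⟨w, hw⟩
      simpa [resHom, inducedPerm, Subgroup.smul_def, Equiv.Perm.smul_def] using hw hg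
  have he : ((resHom G ℓ).ker).map (MulEquiv.subgroupCongr part2).toMonoidHom
      = H.subgroupOf (Subgroup.normalizer (H : Set G)) := by
    ext x
    simp only [hker, Subgroup.mem_map, Subgroup.mem_subgroupOf]
    constructor
    · rintro ⟨y, hy, rfl⟩
      simpa only [MulEquiv.coe_toMonoidHom, MulEquiv.subgroupCongr_apply] using hy
    · intro hx
      refine ⟨⟨(x : G), part2.symm ▸ x.2⟩, hx, ?_⟩
      apply Subtype.ext
      simp only [MulEquiv.coe_toMonoidHom, MulEquiv.subgroupCongr_apply]
  exact ⟨(QuotientGroup.quotientKerEquivRange (resHom G ℓ)).symm.trans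
    (QuotientGroup.congr _ _ (MulEquiv.subgroupCongr part2) he)⟩
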